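/- (Theorem 3, family $U_2$) Assume $(\varrho_n)_{n \in \mathbb{Z}}$ is summable. For every constant $C \ge 0$, the function $u : G_k \to \mathbb{R}$ defined by $u(x) = C \cdot \Sigma^+(\phi(x)) = C \sum_{s \ge \phi(x)} \varrho_s$ is $H_{ij}$-periodic and $p$-harmonic on the Cayley tree: $\Delta_p u(x) = 0$ for all $x \in G_k$, and $u(yx) = u(x)$ for all $y \in H_{ij}$, $x \in G_k$. -/

import Mathlib

open scoped BigOperators

noncomputable section

/-- The group representation `G_k` of the Cayley tree of order `k`:
the free product of `k+1` copies of the cyclic group of order two. -/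
abbrev G (k : ℕ) : Type := Monoid.CoprodI (fun _ : Fin (k + 1) => Multiplicative (ZMod 2))

/-- The generators `a_0, ..., a_k` of `G_k`. -/
def gen (k : ℕ) (s : Fin (k + 1)) : G k :=
  Monoid.CoprodI.of (i := s) (Multiplicative.ofAdd (1 : ZMod 2))

/-- `φ_p(t) = |t|^(p-2) t` (real powers). -/
noncomputable def phiP (p t : ℝ) : ℝ := |t| ^ (p - 2) * t

/-- The discrete `p`-Laplacian on the Cayley tree with resistances `r`:
`Δ_p u (x) = ∑_{s=0}^{k} φ_p ((u (x a_s) - u x) / r (x, x a_s))`. -/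
noncomputable def pLap (k : ℕ) (p : ℝ) (r : G k × G k → ℝ) (u : G k → ℝ) (x : G k) : ℝ :=
  ∑ s : Fin (k + 1), phiP p ((u (x * gen k s) - u x) / r (x, x * gen k s))

/-- A function `u : G_k → ℝ` is `H`-periodic if `u (y x) = u x` for all `y ∈ H`, `x ∈ G_k`. -/
def IsPeriodic (k : ℕ) (H : Subgroup (G k)) (u : G k → ℝ) : Prop :=
  ∀ y ∈ H, ∀ x : G k, u (y * x) = u x

/-- The coset index `φ(x) = ρ(x)(0)` associated to a permutation action `ρ` of `G_k` on `ℤ`. -/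
def cosetIdx {k : ℕ} (ρ : G k →* Equiv.Perm ℤ) (x : G k) : ℤ := ρ x 0

lemma two_cases (m : Multiplicative (ZMod 2)) :
    m = 1 ∨ m = Multiplicative.ofAdd (1 : ZMod 2) := by
  have h2 : ∀ z : ZMod 2, z = 0 ∨ z = 1 := by decide
  rcases h2 m.toAdd with h | h
  · left; rw [← ofAdd_toAdd m, h]; rfl
  · right; rw [← ofAdd_toAdd m, h]

lemma phiP_zero (p : ℝ) : phiP p 0 = 0 := by simp [phiP]

lemma phiP_neg (p t : ℝ) : phiP p (-t) = -phiP p t := by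
  unfold phiP; rw [abs_neg]; ring

/-- The tail sum `Σ⁺`. -/
noncomputable def Sf (ϱ : ℤ → ℝ) (n : ℤ) : ℝ := ∑' m : {m : ℤ // n ≤ m}, ϱ m

lemma aux_affine {k : ℕ} (i j : Fin (k + 1)) (ρ : G k →* Equiv.Perm ℤ)
    (hρi : ∀ n : ℤ, ρ (gen k i) n = 1 - n)
    (hρj : ∀ n : ℤ, ρ (gen k j) n = -1 - n)
    (hρs : ∀ s : Fin (k + 1), s ≠ i → s ≠ j → ρ (gen k s) = 1) (x : G k) :
    ∃ ε c : ℤ, (ε = 1 ∨ ε = -1) ∧ ∀ n, ρ x n = ε * n + c := by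
  induction x using Monoid.CoprodI.induction_on with
  | one => exact ⟨1, 0, Or.inl rfl, by simp⟩
  | of s m =>
    rcases two_cases m with rfl | rfl
    · exact ⟨1, 0, Or.inl rfl, by simp⟩
    · have hgen : (Monoid.CoprodI.of (i := s) (Multiplicative.ofAdd (1 : ZMod 2))) = gen k s := rfl
      rw [hgen]
      by_cases hsi : s = i
      · subst hsi
        exact ⟨-1, 1, Or.inr rfl, fun n => by rw [hρi]; ring⟩
      by_cases hsj : s = j
      · subst hsj
        exact ⟨-1, -1, Or.inr rfl, fun n => by rw [hρj]; ring⟩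
      · refine ⟨1, 0, Or.inl rfl, fun n => ?_⟩
        rw [hρs s hsi hsj]; simp
  | mul x y hx hy =>
    obtain ⟨ε₁, c₁, hε₁, h₁⟩ := hx
    obtain ⟨ε₂, c₂, hε₂, h₂⟩ := hy
    refine ⟨ε₁ * ε₂, ε₁ * c₂ + c₁, ?_, fun n => ?_⟩
    · rcases hε₁ with rfl | rfl <;> rcases hε₂ with rfl | rfl <;> simp
    · rw [map_mul, Equiv.Perm.mul_apply, h₂, h₁]; ring

lemma aux_step (ϱ : ℤ → ℝ) (h : Summable ϱ) (n : ℤ) :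
    Sf ϱ n = ϱ n + Sf ϱ (n + 1) := by
  have h1 : (Set.Ici n) = ({n} : Set ℤ) ∪ Set.Ici (n + 1) := by
    ext m; simp only [Set.mem_Ici, Set.mem_union, Set.mem_singleton_iff]; omega
  calc Sf ϱ n = ∑' m : (Set.Ici n), ϱ m := rfl
    _ = ∑' m : ↥(({n} : Set ℤ) ∪ Set.Ici (n + 1)), ϱ m := by rw [h1]
    _ = (∑' m : ({n} : Set ℤ), ϱ m) + ∑' m : (Set.Ici (n + 1)), ϱ m := by
        refine Summable.tsum_union_disjoint ?_ (h.subtype _) (h.subtype _)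
        simp only [Set.disjoint_singleton_left, Set.mem_Ici]
        omega
    _ = ϱ n + ∑' m : (Set.Ici (n + 1)), ϱ m := by rw [tsum_singleton]
    _ = ϱ n + Sf ϱ (n + 1) := rfl

theorem stmt9 (k : ℕ) (hk : 1 ≤ k) (p : ℝ) (hp1 : 1 < p)
    (r : G k × G k → ℝ) (hr_symm : ∀ x y : G k, r (x, y) = r (y, x)) (hr_pos : ∀ x y : G k, 0 < r (x, y))
    (i j : Fin (k + 1)) (hij : i ≠ j)
    (ρ : G k →* Equiv.Perm ℤ)
    (hρi : ∀ n : ℤ, ρ (gen k i) n = 1 - n)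
    (hρj : ∀ n : ℤ, ρ (gen k j) n = -1 - n)
    (hρs : ∀ s : Fin (k + 1), s ≠ i → s ≠ j → ρ (gen k s) = 1)
    (f : G k →* G k)
    (hfi : f (gen k i) = gen k i) (hfj : f (gen k j) = gen k j)
    (hfs : ∀ s : Fin (k + 1), s ≠ i → s ≠ j → f (gen k s) = 1)
    (ϱ : ℤ → ℝ) (hϱ_pos : ∀ n : ℤ, 0 < ϱ n)
    (hrϱ : ∀ x y : G k, cosetIdx ρ y = cosetIdx ρ x + 1 → r (x, y) = ϱ (cosetIdx ρ x))
    (hϱ_sum : Summable ϱ)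
    (C : ℝ) (hC : 0 ≤ C) :
    IsPeriodic k f.ker (fun x => C * (∑' s : {m : ℤ // cosetIdx ρ x ≤ m}, ϱ s)) ∧
      ∀ x : G k, pLap k p r (fun x => C * (∑' s : {m : ℤ // cosetIdx ρ x ≤ m}, ϱ s)) x = 0 := by
  suffices h : IsPeriodic k f.ker (fun x => C * Sf ϱ (cosetIdx ρ x)) ∧
      ∀ x : G k, pLap k p r (fun x => C * Sf ϱ (cosetIdx ρ x)) x = 0 by exact h
  constructor
  · -- periodicity
    have hcomp : ρ.comp f = ρ := by
      apply Monoid.CoprodI.ext_hom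
      intro s
      refine MonoidHom.ext fun m => ?_
      rcases two_cases m with rfl | rfl
      · simp
      · show ρ (f (gen k s)) = ρ (gen k s)
        by_cases hsi : s = i
        · rw [hsi, hfi]
        by_cases hsj : s = j
        · rw [hsj, hfj]
        · rw [hfs s hsi hsj, map_one, hρs s hsi hsj]
    intro y hy x
    have hρy : ρ y = 1 := by
      have h1 : ρ (f y) = ρ y := DFunLike.congr_fun hcomp y
      rw [MonoidHom.mem_ker] at hy
      rw [hy, map_one] at h1
      exact h1.symm
    have hidx : cosetIdx ρ (y * x) = cosetIdx ρ x := by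
      simp only [cosetIdx, map_mul, Equiv.Perm.mul_apply, hρy, Equiv.Perm.one_apply]
    simp only [hidx]
  · -- harmonicity
    intro x
    obtain ⟨ε, c, hε, hx⟩ := aux_affine i j ρ hρi hρj hρs x
    have hcx : cosetIdx ρ x = c := by
      have := hx 0; simpa [cosetIdx] using this
    have hϱ_ne : ∀ n : ℤ, ϱ n ≠ 0 := fun n => (hϱ_pos n).ne'
    have key_up : ∀ y : G k, cosetIdx ρ y = cosetIdx ρ x + 1 →
        phiP p ((C * Sf ϱ (cosetIdx ρ y) - C * Sf ϱ (cosetIdx ρ x)) / r (x, y)) = phiP p (-C) := by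
      intro y hy
      have hr : r (x, y) = ϱ (cosetIdx ρ x) := hrϱ x y hy
      have hst : Sf ϱ (cosetIdx ρ x) = ϱ (cosetIdx ρ x) + Sf ϱ (cosetIdx ρ y) := by
        rw [hy]; exact aux_step ϱ hϱ_sum _
      rw [hr, hst]
      congr 1
      rw [div_eq_iff (hϱ_ne _)]
      ring
    have key_down : ∀ y : G k, cosetIdx ρ x = cosetIdx ρ y + 1 →
        phiP p ((C * Sf ϱ (cosetIdx ρ y) - C * Sf ϱ (cosetIdx ρ x)) / r (x, y)) = phiP p C := by
      intro y hy
      have hr : r (x, y) = ϱ (cosetIdx ρ y) := by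
        rw [hr_symm]; exact hrϱ y x hy
      have hst : Sf ϱ (cosetIdx ρ y) = ϱ (cosetIdx ρ y) + Sf ϱ (cosetIdx ρ x) := by
        rw [aux_step ϱ hϱ_sum (cosetIdx ρ y), ← hy]
      rw [hr, hst]
      congr 1
      rw [div_eq_iff (hϱ_ne _)]
      ring
    have hnbr : ∀ s : Fin (k + 1), cosetIdx ρ (x * gen k s) = ρ x (ρ (gen k s) 0) := by
      intro s
      simp [cosetIdx, map_mul, Equiv.Perm.mul_apply]
    have hni : cosetIdx ρ (x * gen k i) = ε + c := by
      rw [hnbr, hρi]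
      norm_num [hx 1]
    have hnj : cosetIdx ρ (x * gen k j) = -ε + c := by
      rw [hnbr, hρj]
      norm_num [hx (-1)]
    have hns : ∀ s : Fin (k + 1), s ≠ i → s ≠ j → cosetIdx ρ (x * gen k s) = c := by
      intro s hsi hsj
      rw [hnbr, hρs s hsi hsj]
      simpa [cosetIdx] using hcx
    show (∑ s : Fin (k + 1), phiP p ((C * Sf ϱ (cosetIdx ρ (x * gen k s)) -
        C * Sf ϱ (cosetIdx ρ x)) / r (x, x * gen k s))) = 0
    rw [Finset.sum_eq_add_of_mem i j (Finset.mem_univ i) (Finset.mem_univ j) hij ?_]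
    · rcases hε with rfl | rfl
      · rw [key_up (x * gen k i) (by rw [hni, hcx]; ring),
          key_down (x * gen k j) (by rw [hnj, hcx]; ring), phiP_neg]
        ring
      · rw [key_down (x * gen k i) (by rw [hni, hcx]; ring),
          key_up (x * gen k j) (by rw [hnj, hcx]; ring), phiP_neg]
        ring
    · intro s _ hs
      rw [hns s hs.1 hs.2, hcx]
      simp [phiP_zero]
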